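/- Let V be C¹ and positive definite, and suppose ⟨∇V(x), f(x) + g(x)α(x)⟩ ≤ −‖h(x)‖² − (4/γ²)‖(∇V(x))ᵀ g_d(x)‖² for all x. Then along any solution of ẋ = f(x) + g(x)α(x) + g_d(x)d(t) with x(0) = 0 and output z = h(x), the L₂-gain bound ∫₀^T ‖z(t)‖² dt ≤ γ² ∫₀^T ‖d(t)‖² dt holds for all T ≥ 0. -/

import Mathlib

open scoped RealInnerProductSpace

theorem L2_gain_bound {n m p q : ℕ}
    (V : EuclideanSpace ℝ (Fin n) → ℝ) (hV : ContDiff ℝ 1 V)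
    (hV0 : V 0 = 0) (hVnonneg : ∀ x, 0 ≤ V x) (hVpos : ∀ x, x ≠ 0 → 0 < V x)
    (f : EuclideanSpace ℝ (Fin n) → EuclideanSpace ℝ (Fin n))
    (g : EuclideanSpace ℝ (Fin n) → EuclideanSpace ℝ (Fin m) →L[ℝ] EuclideanSpace ℝ (Fin n))
    (g_d : EuclideanSpace ℝ (Fin n) → EuclideanSpace ℝ (Fin p) →L[ℝ] EuclideanSpace ℝ (Fin n))
    (h : EuclideanSpace ℝ (Fin n) → EuclideanSpace ℝ (Fin q))
    (α : EuclideanSpace ℝ (Fin n) → EuclideanSpace ℝ (Fin m))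
    (hf : Continuous f) (hg : Continuous g) (hgd : Continuous g_d)
    (hh : Continuous h) (hh0 : h 0 = 0) (hα : Continuous α)
    (γ : ℝ) (hγ : 0 < γ)
    (hdiss : ∀ x, ⟪gradient V x, f x + g x (α x)⟫ ≤
      -‖h x‖ ^ 2 - (4 / γ ^ 2) * ‖ContinuousLinearMap.adjoint (g_d x) (gradient V x)‖ ^ 2)
    (x : ℝ → EuclideanSpace ℝ (Fin n)) (d : ℝ → EuclideanSpace ℝ (Fin p))
    (hd : Continuous d)
    (hx : ∀ t, HasDerivAt x (f (x t) + g (x t) (α (x t)) + g_d (x t) (d t)) t)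
    (hx0 : x 0 = 0) :
    ∀ T, 0 ≤ T →
      (∫ t in (0 : ℝ)..T, ‖h (x t)‖ ^ 2) ≤ γ ^ 2 * ∫ t in (0 : ℝ)..T, ‖d t‖ ^ 2 := by
  intro T hT
  set x' : ℝ → EuclideanSpace ℝ (Fin n) :=
    fun t => f (x t) + g (x t) (α (x t)) + g_d (x t) (d t) with hx'def
  have hxc : Continuous x := by
    refine continuous_iff_continuousAt.2 fun t => (hx t).continuousAt
  have hx'c : Continuous x' := by
    apply Continuous.add
    · exact (hf.comp hxc).add ((hg.comp hxc).clm_apply (hα.comp hxc))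
    · exact (hgd.comp hxc).clm_apply hd
  -- derivative of V ∘ x
  have hgradV : ∀ y v, (fderiv ℝ V y : _ →L[ℝ] ℝ) v = ⟪gradient V y, v⟫ := by
    intro y v
    rw [gradient, InnerProductSpace.toDual_symm_apply]
  have hW : ∀ t, HasDerivAt (fun s => V (x s)) (⟪gradient V (x t), x' t⟫) t := by
    intro t
    have h1 : HasFDerivAt V (fderiv ℝ V (x t)) (x t) :=
      (hV.differentiable one_ne_zero (x t)).hasFDerivAt
    have := h1.comp_hasDerivAt t (hx t)
    rwa [hgradV] at this
  -- continuity of the derivative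
  have hgradc : Continuous fun t => gradient V (x t) := by
    have : Continuous (fderiv ℝ V) := hV.continuous_fderiv one_ne_zero
    exact (InnerProductSpace.toDual ℝ _).symm.continuous.comp (this.comp hxc)
  have hWc : Continuous fun t => ⟪gradient V (x t), x' t⟫ :=
    hgradc.inner hx'c
  -- pointwise bound
  have hbound : ∀ t, ⟪gradient V (x t), x' t⟫ ≤ γ ^ 2 * ‖d t‖ ^ 2 - ‖h (x t)‖ ^ 2 := by
    intro t
    have e1 : ⟪gradient V (x t), x' t⟫ =
        ⟪gradient V (x t), f (x t) + g (x t) (α (x t))⟫ +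
          ⟪gradient V (x t), g_d (x t) (d t)⟫ := by
      simp [hx'def, inner_add_right, add_assoc]
    have e2 : ⟪gradient V (x t), g_d (x t) (d t)⟫ =
        ⟪ContinuousLinearMap.adjoint (g_d (x t)) (gradient V (x t)), d t⟫ := by
      rw [ContinuousLinearMap.adjoint_inner_left, real_inner_comm]
    have h3 : ⟪ContinuousLinearMap.adjoint (g_d (x t)) (gradient V (x t)), d t⟫ ≤
        ‖ContinuousLinearMap.adjoint (g_d (x t)) (gradient V (x t))‖ * ‖d t‖ :=
      real_inner_le_norm _ _
    have h4 := hdiss (x t)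
    set a := ‖ContinuousLinearMap.adjoint (g_d (x t)) (gradient V (x t))‖
    have ha : 0 ≤ a := norm_nonneg _
    have hb : (0:ℝ) ≤ ‖d t‖ := norm_nonneg _
    have hγ2 : (0:ℝ) < γ ^ 2 := by positivity
    rw [e1, e2]
    have young : a * ‖d t‖ ≤ (4 / γ ^ 2) * a ^ 2 + γ ^ 2 * ‖d t‖ ^ 2 := by
      rw [div_mul_eq_mul_div, ← sub_nonneg]
      have key : 0 ≤ (4 * a ^ 2 + γ ^ 2 * (γ ^ 2 * ‖d t‖ ^ 2) - γ ^ 2 * (a * ‖d t‖)) := by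
        nlinarith [sq_nonneg (2 * a - γ ^ 2 * ‖d t‖), sq_nonneg (γ * ‖d t‖), mul_nonneg ha hb]
      calc (0:ℝ) ≤ (4 * a ^ 2 + γ ^ 2 * (γ ^ 2 * ‖d t‖ ^ 2) - γ ^ 2 * (a * ‖d t‖)) / γ ^ 2 :=
            div_nonneg key hγ2.le
        _ = 4 * a ^ 2 / γ ^ 2 + γ ^ 2 * ‖d t‖ ^ 2 - a * ‖d t‖ := by
            field_simp
    linarith
  -- FTC
  have hint1 : IntervalIntegrable (fun t => ⟪gradient V (x t), x' t⟫)
      MeasureTheory.volume 0 T := hWc.intervalIntegrable _ _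
  have hint2 : IntervalIntegrable (fun t => γ ^ 2 * ‖d t‖ ^ 2 - ‖h (x t)‖ ^ 2)
      MeasureTheory.volume 0 T := by
    apply Continuous.intervalIntegrable
    exact (continuous_const.mul ((hd.norm).pow 2)).sub (((hh.comp hxc).norm).pow 2)
  have hftc : (∫ t in (0:ℝ)..T, ⟪gradient V (x t), x' t⟫) = V (x T) - V (x 0) := by
    apply intervalIntegral.integral_eq_sub_of_hasDerivAt
    · intro t _
      exact hW t
    · exact hint1
  have hmono : (∫ t in (0:ℝ)..T, ⟪gradient V (x t), x' t⟫) ≤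
      ∫ t in (0:ℝ)..T, (γ ^ 2 * ‖d t‖ ^ 2 - ‖h (x t)‖ ^ 2) := by
    apply intervalIntegral.integral_mono_on hT hint1 hint2
    intro t _
    exact hbound t
  have hVT : 0 ≤ V (x T) := hVnonneg _
  have hV00 : V (x 0) = 0 := by rw [hx0, hV0]
  have hsplit : (∫ t in (0:ℝ)..T, (γ ^ 2 * ‖d t‖ ^ 2 - ‖h (x t)‖ ^ 2)) =
      γ ^ 2 * (∫ t in (0:ℝ)..T, ‖d t‖ ^ 2) - ∫ t in (0:ℝ)..T, ‖h (x t)‖ ^ 2 := by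
    rw [intervalIntegral.integral_sub, intervalIntegral.integral_const_mul]
    · exact (continuous_const.mul ((hd.norm).pow 2)).intervalIntegrable _ _
    · exact (((hh.comp hxc).norm).pow 2).intervalIntegrable _ _
  rw [hsplit] at hmono
  rw [hftc, hV00, sub_zero] at hmono
  linarith
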